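/- Let f : ℝ^d → ℝ be convex, differentiable, and L-smooth for some L > 0, and let (θ_t) be gradient descent iterates θ_{t+1} = θ_t − η_t ∇f(θ_t) with step sizes η_t ∈ (0, 1/L]. Let S := {θ* ∈ ℝ^d : f(θ*) = inf_{θ ∈ ℝ^d} f(θ)}. If S ≠ ∅ and Σ_{t=0}^∞ η_t = ∞, then θ_t converges to a limit θ_∞ ∈ S; moreover ‖θ_∞ − Proj_S(θ_0)‖₂ ≤ Dist_S(θ_0), and hence ‖θ_∞ − θ_0‖₂ ≤ 2 Dist_S(θ_0). -/

import Mathlib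

open RealInnerProductSpace Metric

section aux

variable {E : Type*} [NormedAddCommGroup E] [InnerProductSpace ℝ E] [CompleteSpace E]

lemma aux_hasDerivAt (f : E → ℝ) (hdiff : Differentiable ℝ f) (x v : E) (t : ℝ) :
    HasDerivAt (fun t : ℝ => f (x + t • v)) ⟪gradient f (x + t • v), v⟫ t := by
  have h1 : HasDerivAt (fun t : ℝ => x + t • v) v t := by
    simpa using ((hasDerivAt_id t).smul_const v).const_add x
  have h2 := ((hdiff (x + t • v)).hasGradientAt).hasFDerivAt
  simpa [Function.comp_def] using h2.comp_hasDerivAt t h1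

lemma aux_foc (f : E → ℝ) (hconv : ConvexOn ℝ Set.univ f) (hdiff : Differentiable ℝ f)
    (x y : E) : f x + ⟪gradient f x, y - x⟫ ≤ f y := by
  set g : ℝ → ℝ := fun t => f (x + t • (y - x)) with hg
  have hgc : ConvexOn ℝ Set.univ g := by
    have h := hconv.comp_affineMap (AffineMap.lineMap x y)
    simp only [Set.preimage_univ] at h
    have hkey : g = f ∘ (AffineMap.lineMap x y) := by
      funext t
      simp only [Function.comp_apply, AffineMap.lineMap_apply, hg, vsub_eq_sub, vadd_eq_add]
      rw [show t • (y - x) + x = x + t • (y - x) by abel]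
    rw [hkey]
    exact h
  have hd : HasDerivAt g ⟪gradient f (x + (0:ℝ) • (y - x)), y - x⟫ 0 :=
    aux_hasDerivAt f hdiff x (y - x) 0
  have := hgc.le_slope_of_hasDerivAt (Set.mem_univ (0:ℝ)) (Set.mem_univ (1:ℝ))
    one_pos hd
  simp only [slope_def_field, hg] at this
  simp only [zero_smul, add_zero] at this hd
  have h01 : x + (1:ℝ) • (y - x) = y := by simp
  rw [h01] at this
  have : ⟪gradient f x, y - x⟫ ≤ f y - f x := by
    simpa [div_one] using this
  linarith

lemma aux_descent (f : E → ℝ) (L : ℝ) (hL : 0 < L) (hdiff : Differentiable ℝ f)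
    (hsmooth : ∀ x y : E, ‖gradient f x - gradient f y‖ ≤ L * ‖x - y‖) (x v : E) :
    f (x + v) ≤ f x + ⟪gradient f x, v⟫ + L / 2 * ‖v‖ ^ 2 := by
  have hgradcont : Continuous (gradient f) := by
    have : LipschitzWith (Real.toNNReal L) (gradient f) := by
      apply LipschitzWith.of_dist_le_mul
      intro a b
      rw [dist_eq_norm, dist_eq_norm, Real.coe_toNNReal L hL.le]
      exact hsmooth a b
    exact this.continuous
  set g' : ℝ → ℝ := fun t => ⟪gradient f (x + t • v), v⟫ with hg'
  have hg'cont : Continuous g' := by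
    apply Continuous.inner
    · exact hgradcont.comp (by continuity)
    · exact continuous_const
  have heq : (∫ t in (0:ℝ)..1, g' t) = f (x + v) - f x := by
    have h1 := intervalIntegral.integral_eq_sub_of_hasDerivAt
      (f := fun t : ℝ => f (x + t • v)) (f' := g')
      (fun t _ => aux_hasDerivAt f hdiff x v t) (hg'cont.intervalIntegrable 0 1)
    simpa using h1
  set c : ℝ := ⟪gradient f x, v⟫ with hc
  have hbound : ∀ t ∈ Set.Icc (0:ℝ) 1, g' t ≤ c + (L * ‖v‖ ^ 2) * t := by
    intro t ht
    have h1 : g' t - c = ⟪gradient f (x + t • v) - gradient f x, v⟫ := by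
      rw [inner_sub_left]
    have h2 : ⟪gradient f (x + t • v) - gradient f x, v⟫ ≤
        ‖gradient f (x + t • v) - gradient f x‖ * ‖v‖ := real_inner_le_norm _ _
    have h3 : ‖gradient f (x + t • v) - gradient f x‖ ≤ L * (t * ‖v‖) := by
      have := hsmooth (x + t • v) x
      simpa [norm_smul, abs_of_nonneg ht.1] using this
    have h4 : ‖gradient f (x + t • v) - gradient f x‖ * ‖v‖ ≤ L * (t * ‖v‖) * ‖v‖ :=
      mul_le_mul_of_nonneg_right h3 (norm_nonneg v)
    nlinarith [sq_nonneg ‖v‖]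
  have hintle : (∫ t in (0:ℝ)..1, g' t) ≤ ∫ t in (0:ℝ)..1, (c + (L * ‖v‖ ^ 2) * t) := by
    apply intervalIntegral.integral_mono_on (by norm_num)
      (hg'cont.intervalIntegrable 0 1)
      ((by continuity : Continuous fun t : ℝ => c + (L * ‖v‖ ^ 2) * t).intervalIntegrable 0 1)
      hbound
  have hval : (∫ t in (0:ℝ)..1, (c + (L * ‖v‖ ^ 2) * t)) = c + L / 2 * ‖v‖ ^ 2 := by
    have hint2 : IntervalIntegrable (fun t : ℝ => (L * ‖v‖ ^ 2) * t)
        MeasureTheory.volume 0 1 :=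
      (continuous_const.mul continuous_id').intervalIntegrable 0 1
    rw [intervalIntegral.integral_add intervalIntegrable_const hint2]
    rw [intervalIntegral.integral_const_mul, integral_id, intervalIntegral.integral_const]
    norm_num
    ring
  rw [heq, hval] at hintle
  linarith


end aux


open Finset Filter

/-- **Limit of gradient descent iterates.**
For convex, differentiable, `L`-smooth `f` and gradient descent iterates with step sizes
`η t ∈ (0, 1/L]` satisfying `Σ η t = ∞`, if the set `S` of global minimizers is nonempty,
then `θ t` converges to some `θ∞ ∈ S`, with `‖θ∞ - Proj_S(θ 0)‖ ≤ dist(θ 0, S)` (for the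
Euclidean projection `Proj_S(θ 0)`, i.e. any point of `S` closest to `θ 0`) and hence
`‖θ∞ - θ 0‖ ≤ 2 dist(θ 0, S)`. -/
theorem gd_limit_of_iterates {d : ℕ} (f : EuclideanSpace ℝ (Fin d) → ℝ)
    (L : ℝ) (hL : 0 < L)
    (hconv : ConvexOn ℝ Set.univ f) (hdiff : Differentiable ℝ f)
    (hsmooth : ∀ x y : EuclideanSpace ℝ (Fin d),
      ‖gradient f x - gradient f y‖ ≤ L * ‖x - y‖)
    (η : ℕ → ℝ) (hη : ∀ t, 0 < η t ∧ η t ≤ 1 / L)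
    (θ : ℕ → EuclideanSpace ℝ (Fin d))
    (hupd : ∀ t, θ (t + 1) = θ t - η t • gradient f (θ t))
    (hS : ∃ s : EuclideanSpace ℝ (Fin d), ∀ x, f s ≤ f x)
    (hdiv : Tendsto (fun T => ∑ t ∈ Finset.range T, η t) atTop atTop) :
    ∃ θlim : EuclideanSpace ℝ (Fin d),
      (∀ x, f θlim ≤ f x) ∧
      Tendsto θ atTop (nhds θlim) ∧
      (∀ p : EuclideanSpace ℝ (Fin d), (∀ x, f p ≤ f x) →
        (∀ s : EuclideanSpace ℝ (Fin d), (∀ x, f s ≤ f x) → ‖θ 0 - p‖ ≤ ‖θ 0 - s‖) →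
        ‖θlim - p‖ ≤ Metric.infDist (θ 0) {s : EuclideanSpace ℝ (Fin d) | ∀ x, f s ≤ f x}) ∧
      ‖θlim - θ 0‖ ≤
        2 * Metric.infDist (θ 0) {s : EuclideanSpace ℝ (Fin d) | ∀ x, f s ≤ f x} := by
  obtain ⟨s0, hs0⟩ := hS
  -- descent step
  have step : ∀ (z : EuclideanSpace ℝ (Fin d)) (e : ℝ), 0 ≤ e → e ≤ 1 / L →
      f (z - e • gradient f z) ≤ f z - e / 2 * ‖gradient f z‖ ^ 2 := by
    intro z e he heL
    have h := aux_descent f L hL hdiff hsmooth z (-(e • gradient f z))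
    have h1 : ⟪gradient f z, -(e • gradient f z)⟫ = -(e * ‖gradient f z‖ ^ 2) := by
      rw [inner_neg_right, real_inner_smul_right, real_inner_self_eq_norm_sq]
    have h2 : ‖-(e • gradient f z)‖ ^ 2 = e ^ 2 * ‖gradient f z‖ ^ 2 := by
      rw [norm_neg, norm_smul, mul_pow, Real.norm_eq_abs, sq_abs]
    rw [h1, h2] at h
    have h3 : z + -(e • gradient f z) = z - e • gradient f z := by abel
    rw [h3] at h
    have h4 : e * L ≤ 1 := (le_div_iff₀ hL).mp heL
    nlinarith [mul_nonneg he (sq_nonneg ‖gradient f z‖),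
      mul_nonneg (sub_nonneg.mpr h4) (mul_nonneg he (sq_nonneg ‖gradient f z‖))]
  -- gradient lower bound at minimizers
  have gradLB : ∀ s : EuclideanSpace ℝ (Fin d), (∀ x, f s ≤ f x) → ∀ z,
      ‖gradient f z‖ ^ 2 ≤ 2 * L * (f z - f s) := by
    intro s hs z
    have h := step z (1 / L) (by positivity) le_rfl
    have h2 : f s ≤ f (z - (1 / L) • gradient f z) := hs _
    have hL' : (0:ℝ) < 1 / L := by positivity
    have h3 : f s ≤ f z - 1 / L / 2 * ‖gradient f z‖ ^ 2 := le_trans h2 h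
    have h4 : 1 / L / 2 * ‖gradient f z‖ ^ 2 ≤ f z - f s := by linarith
    calc ‖gradient f z‖ ^ 2 = 2 * L * (1 / L / 2 * ‖gradient f z‖ ^ 2) := by
          field_simp
      _ ≤ 2 * L * (f z - f s) := by
          apply mul_le_mul_of_nonneg_left h4 (by positivity)
  -- sufficient decrease
  have key2 : ∀ t, f (θ (t + 1)) ≤ f (θ t) - η t / 2 * ‖gradient f (θ t)‖ ^ 2 := by
    intro t; rw [hupd t]; exact step _ _ (hη t).1.le (hη t).2
  -- Fejér monotonicity
  have fejer : ∀ s : EuclideanSpace ℝ (Fin d), (∀ x, f s ≤ f x) →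
      ∀ t, ‖θ (t + 1) - s‖ ≤ ‖θ t - s‖ := by
    intro s hs t
    set g := gradient f (θ t) with hgdef
    set a := θ t - s with hadef
    have hexp : ‖θ (t + 1) - s‖ ^ 2 = ‖a‖ ^ 2 - 2 * (η t * ⟪a, g⟫) + η t ^ 2 * ‖g‖ ^ 2 := by
      rw [hupd t]
      have hh : θ t - η t • g - s = a - η t • g := by rw [hadef]; abel
      rw [hh, norm_sub_sq_real, real_inner_smul_right, norm_smul, mul_pow, Real.norm_eq_abs, sq_abs]
    have hfo : f (θ t) + ⟪g, s - θ t⟫ ≤ f s := aux_foc f hconv hdiff (θ t) s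
    have hinner : ⟪g, s - θ t⟫ = -⟪a, g⟫ := by
      rw [real_inner_comm, hadef, show s - θ t = -(θ t - s) by abel, inner_neg_left]
    rw [hinner] at hfo
    have hge : f (θ t) - f s ≤ ⟪a, g⟫ := by linarith
    have hgb : ‖g‖ ^ 2 ≤ 2 * L * (f (θ t) - f s) := gradLB s hs (θ t)
    have hη1 : 0 < η t := (hη t).1
    have hη2 : η t * L ≤ 1 := (le_div_iff₀ hL).mp (hη t).2
    have c1 : η t * ‖g‖ ^ 2 ≤ η t * (2 * L * (f (θ t) - f s)) :=
      mul_le_mul_of_nonneg_left hgb hη1.le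
    have c3 : η t * (2 * L * (f (θ t) - f s)) ≤ η t * (2 * L * ⟪a, g⟫) := by
      apply mul_le_mul_of_nonneg_left _ hη1.le
      apply mul_le_mul_of_nonneg_left hge (by positivity)
    have c4 : L * (η t ^ 2 * ‖g‖ ^ 2) ≤ η t * ‖g‖ ^ 2 := by
      nlinarith [mul_nonneg (sub_nonneg.mpr hη2) (mul_nonneg hη1.le (sq_nonneg ‖g‖))]
    have c5 : L * (η t ^ 2 * ‖g‖ ^ 2) ≤ L * (2 * (η t * ⟪a, g⟫)) := by nlinarith
    have c6 : η t ^ 2 * ‖g‖ ^ 2 ≤ 2 * (η t * ⟪a, g⟫) :=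
      le_of_mul_le_mul_left (by linarith) hL
    have hsq : ‖θ (t + 1) - s‖ ^ 2 ≤ ‖a‖ ^ 2 := by rw [hexp]; linarith
    exact le_of_pow_le_pow_left₀ two_ne_zero (norm_nonneg _) hsq
  have fejer_anti : ∀ s : EuclideanSpace ℝ (Fin d), (∀ x, f s ≤ f x) →
      Antitone (fun t => ‖θ t - s‖) := fun s hs =>
    antitone_nat_of_succ_le (fejer s hs)
  -- closedness of the minimizer set
  have hSclosed : IsClosed {s : EuclideanSpace ℝ (Fin d) | ∀ x, f s ≤ f x} := by
    have : {s : EuclideanSpace ℝ (Fin d) | ∀ x, f s ≤ f x} =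
        ⋂ x, {s | f s ≤ f x} := by ext z; simp
    rw [this]
    exact isClosed_iInter fun x => isClosed_le hdiff.continuous continuous_const
  by_cases h0 : ∀ x, f (θ 0) ≤ f x
  · -- θ 0 is already a minimizer: the iterates are constant
    have hg0 : gradient f (θ 0) = 0 := by
      have h := gradLB (θ 0) h0 (θ 0)
      simp only [sub_self, mul_zero] at h
      have : ‖gradient f (θ 0)‖ = 0 := by nlinarith [norm_nonneg (gradient f (θ 0))]
      simpa using this
    have hconst : ∀ t, θ t = θ 0 := by
      intro t
      induction t with
      | zero => rfl
      | succ n ih => rw [hupd n, ih, hg0, smul_zero, sub_zero]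
    refine ⟨θ 0, h0, ?_, ?_, ?_⟩
    · have : θ = fun _ => θ 0 := funext hconst
      rw [this]; exact tendsto_const_nhds
    · intro p hp hnear
      have h1 := hnear (θ 0) h0
      simp only [sub_self, norm_zero] at h1
      have h2 : ‖θ 0 - p‖ = 0 := le_antisymm h1 (norm_nonneg _)
      rw [h2]
      exact Metric.infDist_nonneg
    · simp only [sub_self, norm_zero]
      have := Metric.infDist_nonneg (x := θ 0)
        (s := {s : EuclideanSpace ℝ (Fin d) | ∀ x, f s ≤ f x})
      linarith
  · -- main case
    have hD : 0 < ‖θ 0 - s0‖ := by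
      rcases eq_or_ne (θ 0) s0 with h | h
      · exact absurd (fun x => h ▸ hs0 x) h0
      · rw [norm_pos_iff]
        exact sub_ne_zero.mpr h
    set D : ℝ := ‖θ 0 - s0‖ with hDdef
    set δ : ℕ → ℝ := fun t => f (θ t) - f s0 with hδdef
    have hδnn : ∀ t, 0 ≤ δ t := fun t => sub_nonneg.mpr (hs0 (θ t))
    have hδanti : Antitone δ := by
      apply antitone_nat_of_succ_le
      intro t
      have := key2 t
      have h1 : 0 ≤ η t / 2 * ‖gradient f (θ t)‖ ^ 2 :=
        mul_nonneg (by linarith [(hη t).1]) (sq_nonneg _)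
      simp only [hδdef]
      linarith
    have hbd : ∀ t, ‖θ t - s0‖ ≤ D := fun t => fejer_anti s0 hs0 (Nat.zero_le t)
    have hδg : ∀ t, δ t ≤ ‖gradient f (θ t)‖ * D := by
      intro t
      have hfo : f (θ t) + ⟪gradient f (θ t), s0 - θ t⟫ ≤ f s0 :=
        aux_foc f hconv hdiff (θ t) s0
      have h1 : δ t ≤ ⟪gradient f (θ t), θ t - s0⟫ := by
        have : ⟪gradient f (θ t), s0 - θ t⟫ = -⟪gradient f (θ t), θ t - s0⟫ := by
          rw [show s0 - θ t = -(θ t - s0) by abel, inner_neg_right]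
        rw [this] at hfo
        simp only [hδdef]
        linarith
      calc δ t ≤ ⟪gradient f (θ t), θ t - s0⟫ := h1
        _ ≤ ‖gradient f (θ t)‖ * ‖θ t - s0‖ := real_inner_le_norm _ _
        _ ≤ ‖gradient f (θ t)‖ * D := by
            apply mul_le_mul_of_nonneg_left (hbd t) (norm_nonneg _)
    have hstep2 : ∀ t, η t * δ t ^ 2 ≤ 2 * D ^ 2 * (δ t - δ (t + 1)) := by
      intro t
      have h1 : δ t - δ (t + 1) ≥ η t / 2 * ‖gradient f (θ t)‖ ^ 2 := by
        have := key2 t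
        simp only [hδdef]
        linarith
      have h2 : δ t ^ 2 ≤ ‖gradient f (θ t)‖ ^ 2 * D ^ 2 := by
        have := hδg t
        nlinarith [hδnn t, norm_nonneg (gradient f (θ t)), hD]
      have hη1 := (hη t).1
      have hA : η t * δ t ^ 2 ≤ η t * (‖gradient f (θ t)‖ ^ 2 * D ^ 2) :=
        mul_le_mul_of_nonneg_left h2 hη1.le
      have hB : 2 * D ^ 2 * (η t / 2 * ‖gradient f (θ t)‖ ^ 2) ≤
          2 * D ^ 2 * (δ t - δ (t + 1)) :=
        mul_le_mul_of_nonneg_left (by linarith) (by positivity)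
      calc η t * δ t ^ 2 ≤ η t * (‖gradient f (θ t)‖ ^ 2 * D ^ 2) := hA
        _ = 2 * D ^ 2 * (η t / 2 * ‖gradient f (θ t)‖ ^ 2) := by ring
        _ ≤ 2 * D ^ 2 * (δ t - δ (t + 1)) := hB
    have hsum : ∀ T, δ T ^ 2 * (∑ t ∈ Finset.range T, η t) ≤ 2 * D ^ 2 * δ 0 := by
      intro T
      have h1 : δ T ^ 2 * (∑ t ∈ Finset.range T, η t) =
          ∑ t ∈ Finset.range T, δ T ^ 2 * η t := by rw [Finset.mul_sum]
      have h2 : ∀ t ∈ Finset.range T, δ T ^ 2 * η t ≤ η t * δ t ^ 2 := by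
        intro t ht
        have hle : δ T ≤ δ t := hδanti (Finset.mem_range.mp ht).le
        have : δ T ^ 2 ≤ δ t ^ 2 := by nlinarith [hδnn T, hδnn t]
        nlinarith [(hη t).1]
      have h3 : ∑ t ∈ Finset.range T, η t * δ t ^ 2 ≤
          ∑ t ∈ Finset.range T, 2 * D ^ 2 * (δ t - δ (t + 1)) :=
        Finset.sum_le_sum fun t _ => hstep2 t
      have h4 : ∑ t ∈ Finset.range T, 2 * D ^ 2 * (δ t - δ (t + 1)) =
          2 * D ^ 2 * (δ 0 - δ T) := by
        rw [← Finset.mul_sum, Finset.sum_range_sub' δ]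
      have h5 : 2 * D ^ 2 * (δ 0 - δ T) ≤ 2 * D ^ 2 * δ 0 := by
        nlinarith [hδnn T, hD]
      calc δ T ^ 2 * (∑ t ∈ Finset.range T, η t)
          = ∑ t ∈ Finset.range T, δ T ^ 2 * η t := h1
        _ ≤ ∑ t ∈ Finset.range T, η t * δ t ^ 2 := Finset.sum_le_sum h2
        _ ≤ 2 * D ^ 2 * (δ 0 - δ T) := h3.trans_eq h4
        _ ≤ 2 * D ^ 2 * δ 0 := h5
    -- δ → 0
    have hδ2tend : Tendsto (fun T => δ T ^ 2) atTop (nhds 0) := by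
      apply squeeze_zero' (Filter.Eventually.of_forall fun T => sq_nonneg (δ T))
        ?_ (Filter.Tendsto.div_atTop (tendsto_const_nhds (x := 2 * D ^ 2 * δ 0)) hdiv)
      have hpos : ∀ᶠ T in atTop, 0 < ∑ t ∈ Finset.range T, η t :=
        hdiv.eventually_gt_atTop 0
      filter_upwards [hpos] with T hT
      rw [le_div_iff₀ hT]
      exact hsum T
    have hδtend : Tendsto δ atTop (nhds 0) := by
      have h1 : Tendsto (fun T => Real.sqrt (δ T ^ 2)) atTop (nhds 0) := by
        have := (Real.continuous_sqrt.tendsto 0).comp hδ2tend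
        simpa [Function.comp_def] using this
      have h2 : (fun T => Real.sqrt (δ T ^ 2)) = δ := by
        funext T; rw [Real.sqrt_sq (hδnn T)]
      rwa [h2] at h1
    have hftend : Tendsto (fun t => f (θ t)) atTop (nhds (f s0)) := by
      have := hδtend.add_const (f s0)
      simpa [hδdef] using this
    -- cluster point
    have hmem : ∀ t, θ t ∈ Metric.closedBall s0 D := by
      intro t
      rw [Metric.mem_closedBall, dist_eq_norm]
      exact hbd t
    obtain ⟨w, -, φ, hφ, hφtend⟩ :=
      (isCompact_closedBall s0 D).tendsto_subseq hmem
    have hfw : ∀ x, f w ≤ f x := by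
      have h1 : Tendsto (fun k => f (θ (φ k))) atTop (nhds (f w)) :=
        (hdiff.continuous.tendsto w).comp hφtend
      have h2 : Tendsto (fun k => f (θ (φ k))) atTop (nhds (f s0)) :=
        hftend.comp hφ.tendsto_atTop
      have h3 : f w = f s0 := tendsto_nhds_unique h1 h2
      intro x; rw [h3]; exact hs0 x
    -- convergence of the whole sequence to w
    have hwanti : Antitone (fun t => ‖θ t - w‖) := fejer_anti w hfw
    have hsubz : Tendsto (fun k => ‖θ (φ k) - w‖) atTop (nhds 0) := by
      have := tendsto_iff_norm_sub_tendsto_zero.mp hφtend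
      simpa using this
    have hlim0 : Tendsto (fun t => ‖θ t - w‖) atTop (nhds 0) := by
      have hbdd : BddBelow (Set.range fun t => ‖θ t - w‖) :=
        ⟨0, by rintro - ⟨t, rfl⟩; positivity⟩
      have h1 := tendsto_atTop_ciInf hwanti hbdd
      have h2 := h1.comp hφ.tendsto_atTop
      have h3 : (⨅ t, ‖θ t - w‖) = 0 := tendsto_nhds_unique h2 hsubz
      rwa [h3] at h1
    have hθw : Tendsto θ atTop (nhds w) :=
      tendsto_iff_norm_sub_tendsto_zero.mpr hlim0
    -- limit distance bounds
    have hfej0 : ∀ s : EuclideanSpace ℝ (Fin d), (∀ x, f s ≤ f x) →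
        ‖w - s‖ ≤ ‖θ 0 - s‖ := by
      intro s hs
      have h1 : Tendsto (fun t => ‖θ t - s‖) atTop (nhds ‖w - s‖) :=
        ((hθw.sub tendsto_const_nhds).norm)
      exact le_of_tendsto h1 (Filter.Eventually.of_forall fun t =>
        fejer_anti s hs (Nat.zero_le t))
    refine ⟨w, hfw, hθw, ?_, ?_⟩
    · intro p hp hnear
      have h1 : ‖w - p‖ ≤ ‖θ 0 - p‖ := hfej0 p hp
      have h2 : ‖θ 0 - p‖ ≤
          Metric.infDist (θ 0) {s : EuclideanSpace ℝ (Fin d) | ∀ x, f s ≤ f x} := by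
        rw [Metric.infDist_eq_iInf]
        have : Nonempty {s : EuclideanSpace ℝ (Fin d) | ∀ x, f s ≤ f x} := ⟨⟨s0, hs0⟩⟩
        apply le_ciInf
        rintro ⟨s, hsmem⟩
        rw [dist_eq_norm]
        exact hnear s hsmem
      linarith
    · obtain ⟨p0, hp0S, hp0d⟩ :=
        hSclosed.exists_infDist_eq_dist ⟨s0, hs0⟩ (θ 0)
      have h1 : ‖w - p0‖ ≤ ‖θ 0 - p0‖ := hfej0 p0 hp0S
      have h2 : ‖θ 0 - p0‖ =
          Metric.infDist (θ 0) {s : EuclideanSpace ℝ (Fin d) | ∀ x, f s ≤ f x} := by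
        rw [hp0d, dist_eq_norm]
      calc ‖w - θ 0‖ ≤ ‖w - p0‖ + ‖p0 - θ 0‖ := by
            have := dist_triangle w p0 (θ 0)
            simpa [dist_eq_norm] using this
        _ ≤ ‖θ 0 - p0‖ + ‖θ 0 - p0‖ := by
            rw [norm_sub_rev p0 (θ 0)]
            linarith
        _ = 2 * Metric.infDist (θ 0) {s : EuclideanSpace ℝ (Fin d) | ∀ x, f s ≤ f x} := by
            rw [h2]; ring
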